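/- No (2k+1)-regular multigraph contains 2k+2 pairwise edge-disjoint maximum matchings. -/

import Mathlib

structure Multigraph where
  V : Type
  E : Type
  fintypeV : Fintype V
  decEqV : DecidableEq V
  fintypeE : Fintype E
  decEqE : DecidableEq E
  ends : E → Sym2 V

attribute [instance] Multigraph.fintypeV Multigraph.decEqV Multigraph.fintypeE Multigraph.decEqE

namespace Multigraph

/-- `e` is a loop if both of its endpoints coincide. -/
def IsLoop (G : Multigraph) (e : G.E) : Prop := (G.ends e).IsDiag

/-- A loopless multigraph. -/
def Loopless (G : Multigraph) : Prop := ∀ e, ¬ G.IsLoop e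

/-- Degree of a vertex: loops count twice. -/
def deg (G : Multigraph) (v : G.V) : ℕ :=
  ∑ e : G.E, (if G.ends e = Sym2.diag v then 2 else if v ∈ G.ends e then 1 else 0)

/-- Adjacency via some edge. -/
def Adj (G : Multigraph) (u v : G.V) : Prop := ∃ e, G.ends e = s(u, v)

/-- Connectivity. -/
def Connected (G : Multigraph) : Prop := ∀ u v : G.V, Relation.ReflTransGen G.Adj u v

/-- A matching: a set of non-loop edges no two of which share an endpoint. -/
def IsMatching (G : Multigraph) (M : Finset G.E) : Prop :=
  (∀ e ∈ M, ¬ G.IsLoop e) ∧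
  ∀ e ∈ M, ∀ f ∈ M, e ≠ f → ∀ v : G.V, v ∈ G.ends e → v ∉ G.ends f

/-- A maximum matching. -/
def IsMaximumMatching (G : Multigraph) (M : Finset G.E) : Prop :=
  G.IsMatching M ∧ ∀ M' : Finset G.E, G.IsMatching M' → M'.card ≤ M.card

/-- `v` is saturated by `M`. -/
def Saturated (G : Multigraph) (M : Finset G.E) (v : G.V) : Prop :=
  ∃ e ∈ M, v ∈ G.ends e

/-- Size of a maximum matching. -/
noncomputable def nu1 (G : Multigraph) : ℕ :=
  sSup {m | ∃ M : Finset G.E, G.IsMatching M ∧ M.card = m}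

/-- Max number of edges coverable by two disjoint matchings. -/
noncomputable def nu2 (G : Multigraph) : ℕ :=
  sSup {m | ∃ H H' : Finset G.E, G.IsMatching H ∧ G.IsMatching H' ∧
    Disjoint H H' ∧ H.card + H'.card = m}

/-- Max number of edges coverable by three pairwise disjoint matchings. -/
noncomputable def nu3 (G : Multigraph) : ℕ :=
  sSup {m | ∃ H₁ H₂ H₃ : Finset G.E, G.IsMatching H₁ ∧ G.IsMatching H₂ ∧ G.IsMatching H₃ ∧
    Disjoint H₁ H₂ ∧ Disjoint H₁ H₃ ∧ Disjoint H₂ H₃ ∧ H₁.card + H₂.card + H₃.card = m}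

/-- Subdividing the edge `e`, with endpoints `u`, `v`, once: replace it by a path `u - w - v`
through a new vertex `w`. -/
def subdivideOnce (G : Multigraph) (e : G.E) (u v : G.V) : Multigraph where
  V := G.V ⊕ Unit
  E := {f : G.E // f ≠ e} ⊕ Bool
  fintypeV := inferInstance
  decEqV := inferInstance
  fintypeE := inferInstance
  decEqE := inferInstance
  ends := fun f =>
    match f with
    | Sum.inl ⟨f, _⟩ => (G.ends f).map Sum.inl
    | Sum.inr true => s(Sum.inl u, Sum.inr ())
    | Sum.inr false => s(Sum.inl v, Sum.inr ())

/-- Subdividing every edge `e` exactly `k e` times, where `fst`/`snd` pick out the endpoints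
of every edge. The edge `e` is replaced by the path
`fst e, (e,0), (e,1), …, (e, k e - 1), snd e` of length `k e + 1`. -/
def subdivide (G : Multigraph) (fst snd : G.E → G.V) (k : G.E → ℕ) : Multigraph where
  V := G.V ⊕ (Σ e : G.E, Fin (k e))
  E := Σ e : G.E, Fin (k e + 1)
  fintypeV := inferInstance
  decEqV := inferInstance
  fintypeE := inferInstance
  decEqE := inferInstance
  ends := fun f =>
    s( if h : f.2.val = 0 then Sum.inl (fst f.1)
       else Sum.inr ⟨f.1, ⟨f.2.val - 1, by omega⟩⟩,
       if h : f.2.val = k f.1 then Sum.inl (snd f.1)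
       else Sum.inr ⟨f.1, ⟨f.2.val, by have := f.2.isLt; omega⟩⟩ )



section Helpers

variable {G : Multigraph}

lemma sym2_exists (z : Sym2 G.V) : ∃ x y, z = s(x,y) := by
  induction z using Sym2.ind with
  | _ x y => exact ⟨x, y, rfl⟩

lemma adj_symm {u v : G.V} (h : G.Adj u v) : G.Adj v u := by
  obtain ⟨e, he⟩ := h; exact ⟨e, by rw [he, Sym2.eq_swap]⟩

lemma adj_ne (hl : G.Loopless) {u v : G.V} (h : G.Adj u v) : u ≠ v := by
  rintro rfl; obtain ⟨e, he⟩ := h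
  exact hl e (by rw [IsLoop, he]; exact Sym2.mk_isDiag_iff.2 rfl)

lemma exists_other (hl : G.Loopless) {e : G.E} {v : G.V} (h : v ∈ G.ends e) :
    ∃ w, w ≠ v ∧ G.ends e = s(v, w) := by
  obtain ⟨a, b, hab⟩ := sym2_exists (G.ends e)
  have hne : a ≠ b := fun hh => hl e (by rw [IsLoop, hab]; exact Sym2.mk_isDiag_iff.2 hh)
  rw [hab, Sym2.mem_iff] at h
  rcases h with rfl | rfl
  · exact ⟨b, Ne.symm hne, hab⟩
  · exact ⟨a, hne, by rw [hab, Sym2.eq_swap]⟩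

lemma matching_unique {M : Finset G.E} (hM : G.IsMatching M) {e f : G.E} {v : G.V}
    (he : e ∈ M) (hf : f ∈ M) (hve : v ∈ G.ends e) (hvf : v ∈ G.ends f) : e = f := by
  by_contra hne
  exact hM.2 e he f hf hne v hve hvf

lemma matching_subset {M M' : Finset G.E} (h : M' ⊆ M) (hM : G.IsMatching M) :
    G.IsMatching M' :=
  ⟨fun e he => hM.1 e (h he), fun e he f hf hef v hv => hM.2 e (h he) f (h hf) hef v hv⟩

lemma matching_insert {M : Finset G.E} {e : G.E} (hM : G.IsMatching M) (he : ¬ G.IsLoop e)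
    (h : ∀ f ∈ M, ∀ v, v ∈ G.ends e → v ∉ G.ends f) : G.IsMatching (insert e M) := by
  constructor
  · intro f hf
    rcases Finset.mem_insert.1 hf with rfl | hf
    · exact he
    · exact hM.1 f hf
  · intro f hf g hg hfg v hvf
    rcases Finset.mem_insert.1 hf with hf1 | hf1
    · rcases Finset.mem_insert.1 hg with hg1 | hg1
      · exact absurd (hf1.trans hg1.symm) hfg
      · subst hf1; exact h g hg1 v hvf
    · rcases Finset.mem_insert.1 hg with hg1 | hg1
      · subst hg1; exact fun hvg => h f hf1 v hvg hvf
      · exact hM.2 f hf1 g hg1 hfg v hvf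

lemma max_not_both_unsat {M : Finset G.E} (hM : G.IsMaximumMatching M) {u v : G.V} {e : G.E}
    (hends : G.ends e = s(u,v)) (huv : u ≠ v)
    (hu : ¬ G.Saturated M u) (hv : ¬ G.Saturated M v) : False := by
  have hnl : ¬ G.IsLoop e := by
    rw [IsLoop, hends]; simpa [Sym2.mk_isDiag_iff] using huv
  have heM : e ∉ M := fun h => hu ⟨e, h, by rw [hends]; simp⟩
  have hmem : ∀ x, x ∈ G.ends e → x = u ∨ x = v := by
    intro x hx; rwa [hends, Sym2.mem_iff] at hx
  have hmat : G.IsMatching (insert e M) := by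
    refine matching_insert hM.1 hnl ?_
    intro f hf x hxe hxf
    rcases hmem x hxe with rfl | rfl
    · exact hu ⟨f, hf, hxf⟩
    · exact hv ⟨f, hf, hxf⟩
  have := hM.2 _ hmat
  rw [Finset.card_insert_of_notMem heM] at this
  omega

end Helpers


section LemmaP

variable {G : Multigraph}

/-- Alternating-path exchange lemma: if `M` is a maximum matching, `N` a matching of the
same size, and `u` is `M`-unsaturated but `N`-saturated, then following the alternating
path from `u` produces an endpoint `z` (which is `N`-unsaturated and `M`-saturated) and
swapped matchings `M'` (saturating `u` instead of `z`) and `N'` containing strictly more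
edges of `M`. -/
lemma lemmaP (hl : G.Loopless) :
    ∀ n : ℕ, ∀ M N : Finset G.E, ∀ u : G.V, (N \ M).card ≤ n →
    G.IsMaximumMatching M → G.IsMatching N → N.card = M.card →
    ¬ G.Saturated M u → G.Saturated N u →
    ∃ z M' N',
      z ≠ u ∧ ¬ G.Saturated N z ∧ G.Saturated M z ∧
      G.IsMatching M' ∧ M'.card = M.card ∧
      (∀ x, G.Saturated M' x ↔ ((G.Saturated M x ∧ x ≠ z) ∨ x = u)) ∧
      G.IsMatching N' ∧ N'.card = N.card ∧
      (∀ x, ¬ G.Saturated N x → x ≠ z → ¬ G.Saturated N' x) ∧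
      M ∩ N ⊆ N' ∧ ∃ g, g ∈ M ∧ g ∈ N' ∧ g ∉ N := by
  intro n
  induction n using Nat.strong_induction_on with
  | _ n ih =>
  intro M N u hn hM hN hcard hMu hNu
  obtain ⟨e, heN, hue⟩ := hNu
  obtain ⟨u1, hu1u, hends_e⟩ := exists_other hl hue
  have hnl_e : ¬ G.IsLoop e := hl e
  have heM : e ∉ M := fun h => hMu ⟨e, h, hue⟩
  have hmem_e : ∀ x, x ∈ G.ends e → x = u ∨ x = u1 := by
    intro x hx; rwa [hends_e, Sym2.mem_iff] at hx
  have hu1e : u1 ∈ G.ends e := by rw [hends_e]; simp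
  by_cases hMu1 : G.Saturated M u1
  swap
  · exact absurd (max_not_both_unsat hM hends_e hu1u.symm hMu hMu1) id
  obtain ⟨f, hfM, hu1f⟩ := hMu1
  have hnl_f : ¬ G.IsLoop f := hl f
  obtain ⟨u2, hu2u1, hends_f⟩ := exists_other hl hu1f
  have hmem_f : ∀ x, x ∈ G.ends f → x = u1 ∨ x = u2 := by
    intro x hx; rwa [hends_f, Sym2.mem_iff] at hx
  have hu2f : u2 ∈ G.ends f := by rw [hends_f]; simp
  have hef : e ≠ f := fun h => heM (h ▸ hfM)
  have hfN : f ∉ N := fun hfN' => hN.2 e heN f hfN' hef u1 hu1e hu1f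
  have hu2u : u2 ≠ u := by
    rintro rfl
    exact hMu ⟨f, hfM, hu2f⟩
  have hMu2 : G.Saturated M u2 := ⟨f, hfM, hu2f⟩
  -- the swapped matching M1 = M - f + e
  have heMef : e ∉ M.erase f := fun h => heM (Finset.mem_of_mem_erase h)
  have hM1 : G.IsMatching (insert e (M.erase f)) := by
    refine matching_insert (matching_subset (Finset.erase_subset f M) hM.1) hnl_e ?_
    intro g hg x hxe hxg
    rcases hmem_e x hxe with rfl | rfl
    · exact hMu ⟨g, Finset.mem_of_mem_erase hg, hxg⟩
    · exact Finset.ne_of_mem_erase hg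
        (matching_unique hM.1 (Finset.mem_of_mem_erase hg) hfM hxg hu1f)
  have hM1card : (insert e (M.erase f)).card = M.card := by
    rw [Finset.card_insert_of_notMem heMef, Finset.card_erase_of_mem hfM]
    have : 1 ≤ M.card := Finset.card_pos.2 ⟨f, hfM⟩
    omega
  have hchar1 : ∀ x, G.Saturated (insert e (M.erase f)) x ↔
      ((G.Saturated M x ∧ x ≠ u2) ∨ x = u) := by
    intro x
    constructor
    · rintro ⟨g, hg, hxg⟩
      rcases Finset.mem_insert.1 hg with rfl | hg
      · rcases hmem_e x hxg with rfl | rfl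
        · exact Or.inr rfl
        · exact Or.inl ⟨⟨f, hfM, hu1f⟩, hu2u1.symm⟩
      · refine Or.inl ⟨⟨g, Finset.mem_of_mem_erase hg, hxg⟩, ?_⟩
        rintro rfl
        exact Finset.ne_of_mem_erase hg
          (matching_unique hM.1 (Finset.mem_of_mem_erase hg) hfM hxg hu2f)
    · rintro (⟨⟨g, hgM, hxg⟩, hxu2⟩ | rfl)
      · by_cases hgf : g = f
        · subst hgf
          have hx1 : x = u1 := by
            rcases hmem_f x hxg with h | h
            · exact h
            · exact absurd h hxu2
          subst hx1
          exact ⟨e, Finset.mem_insert_self _ _, hu1e⟩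
        · exact ⟨g, Finset.mem_insert_of_mem (Finset.mem_erase.2 ⟨hgf, hgM⟩), hxg⟩
      · exact ⟨e, Finset.mem_insert_self _ _, by rw [hends_e]; simp⟩
  have hM1u2 : ¬ G.Saturated (insert e (M.erase f)) u2 := by
    rw [hchar1]
    rintro (⟨_, h⟩ | h)
    · exact h rfl
    · exact hu2u h
  by_cases hNu2 : G.Saturated N u2
  · -- recursive case: continue the alternating path from u2
    have hsub : N \ insert e (M.erase f) ⊆ (N \ M).erase e := by
      intro x hx
      rw [Finset.mem_sdiff] at hx
      rw [Finset.mem_erase, Finset.mem_sdiff]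
      have hxe : x ≠ e := fun h => hx.2 (by rw [h]; exact Finset.mem_insert_self e _)
      refine ⟨hxe, hx.1, fun hxM => ?_⟩
      have hxf : x = f := by
        by_contra hxf
        exact hx.2 (Finset.mem_insert_of_mem (Finset.mem_erase.2 ⟨hxf, hxM⟩))
      exact hfN (hxf ▸ hx.1)
    have heNM : e ∈ N \ M := Finset.mem_sdiff.2 ⟨heN, heM⟩
    have hlt : (N \ insert e (M.erase f)).card < n :=
      lt_of_lt_of_le
        (lt_of_le_of_lt (Finset.card_le_card hsub) (Finset.card_erase_lt_of_mem heNM)) hn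
    have hM1max : G.IsMaximumMatching (insert e (M.erase f)) :=
      ⟨hM1, fun K hK => (hM.2 K hK).trans hM1card.ge⟩
    have hcard1 : N.card = (insert e (M.erase f)).card := by rw [hM1card, hcard]
    obtain ⟨z, M'', N'', hz_ne_u2, hzN, hzM1, hM''m, hM''c, hchar2, hN''m, hN''c, hpres,
        hsub2, g, hgM1, hgN'', hgN⟩ :=
      ih (N \ insert e (M.erase f)).card hlt (insert e (M.erase f)) N u2 le_rfl
        hM1max hN hcard1 hM1u2 hNu2
    have hzu : z ≠ u := fun h => hzN (h ▸ ⟨e, heN, hue⟩)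
    have hzM : G.Saturated M z := by
      obtain ⟨h, hh, hzh⟩ := hzM1
      rcases Finset.mem_insert.1 hh with rfl | hh
      · rcases hmem_e z hzh with rfl | rfl
        · exact absurd rfl hzu
        · exact ⟨f, hfM, hu1f⟩
      · exact ⟨h, Finset.mem_of_mem_erase hh, hzh⟩
    refine ⟨z, M'', N'', hzu, hzN, hzM, hM''m, by rw [hM''c, hM1card], ?_, hN''m, hN''c,
      hpres, ?_, ?_⟩
    · intro x
      rw [hchar2 x, hchar1 x]
      constructor
      · rintro (⟨(⟨hx, hxu2⟩ | rfl), hxz⟩ | rfl)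
        · exact Or.inl ⟨hx, hxz⟩
        · exact Or.inr rfl
        · exact Or.inl ⟨hMu2, fun h => hz_ne_u2 h.symm⟩
      · rintro (⟨hx, hxz⟩ | rfl)
        · by_cases hxu2 : x = u2
          · exact Or.inr hxu2
          · exact Or.inl ⟨Or.inl ⟨hx, hxu2⟩, hxz⟩
        · exact Or.inl ⟨Or.inr rfl, Ne.symm hzu⟩
    · intro x hx
      rw [Finset.mem_inter] at hx
      have hxf : x ≠ f := fun h => hfN (h ▸ hx.2)
      exact hsub2 (Finset.mem_inter.2
        ⟨Finset.mem_insert_of_mem (Finset.mem_erase.2 ⟨hxf, hx.1⟩), hx.2⟩)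
    · have hge : g ≠ e := fun h => hgN (h ▸ heN)
      rcases Finset.mem_insert.1 hgM1 with h | h
      · exact absurd h hge
      · exact ⟨g, Finset.mem_of_mem_erase h, hgN'', hgN⟩
  · -- base case: the path ends at u2
    have hfNe : f ∉ N.erase e := fun h => hfN (Finset.mem_of_mem_erase h)
    have hN'm : G.IsMatching (insert f (N.erase e)) := by
      refine matching_insert (matching_subset (Finset.erase_subset _ _) hN) hnl_f ?_
      intro g hg x hxf hxg
      rcases hmem_f x hxf with rfl | rfl
      · exact Finset.ne_of_mem_erase hg
          (matching_unique hN (Finset.mem_of_mem_erase hg) heN hxg hu1e)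
      · exact hNu2 ⟨g, Finset.mem_of_mem_erase hg, hxg⟩
    have hN'c : (insert f (N.erase e)).card = N.card := by
      rw [Finset.card_insert_of_notMem hfNe, Finset.card_erase_of_mem heN]
      have : 1 ≤ N.card := Finset.card_pos.2 ⟨e, heN⟩
      omega
    refine ⟨u2, insert e (M.erase f), insert f (N.erase e), hu2u, hNu2, hMu2, hM1,
      hM1card, hchar1, hN'm, hN'c, ?_, ?_, f, hfM, Finset.mem_insert_self _ _, hfN⟩
    · rintro x hxN hxu2 ⟨g, hg, hxg⟩
      rcases Finset.mem_insert.1 hg with rfl | hg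
      · rcases hmem_f x hxg with rfl | rfl
        · exact hxN ⟨e, heN, hu1e⟩
        · exact hxu2 rfl
      · exact hxN ⟨g, Finset.mem_of_mem_erase hg, hxg⟩
    · intro x hx
      rw [Finset.mem_inter] at hx
      have hxe : x ≠ e := fun h => heM (h ▸ hx.1)
      exact Finset.mem_insert_of_mem (Finset.mem_erase.2 ⟨hxe, hx.2⟩)

end LemmaP


section Descent

variable {G : Multigraph}

/-- Gallai-style descent: if every vertex is missed by some maximum matching, then
no maximum matching misses two distinct vertices connected by a walk. -/
lemma descent (hl : G.Loopless)
    (hiness : ∀ w : G.V, ∃ N, G.IsMaximumMatching N ∧ ¬ G.Saturated N w)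
    {v : G.V} :
    ∀ {u : G.V}, Relation.ReflTransGen G.Adj u v →
      ∀ M, G.IsMaximumMatching M → u ≠ v → ¬ G.Saturated M u → ¬ G.Saturated M v →
      False := by
  intro u hreach
  induction hreach using Relation.ReflTransGen.head_induction_on with
  | refl => intro M _ huv _ _; exact huv rfl
  | @head u w hadj htail ih =>
    intro M hM huv hMu hMv
    classical
    by_cases hwv : w = v
    · subst hwv
      obtain ⟨e, he⟩ := hadj
      exact max_not_both_unsat hM he huv hMu hMv
    · by_cases hMw : G.Saturated M w
      swap
      · exact ih M hM hwv hMw hMv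
      · obtain ⟨N0, hN0⟩ := hiness w
        set S : Finset (Finset G.E) :=
          Finset.univ.filter (fun N => G.IsMaximumMatching N ∧ ¬ G.Saturated N w) with hSdef
        have hS : N0 ∈ S := by
          rw [hSdef, Finset.mem_filter]
          exact ⟨Finset.mem_univ _, hN0.1, hN0.2⟩
        obtain ⟨N, hNS, hNmax⟩ :=
          Finset.exists_max_image S (fun N => (M ∩ N).card) ⟨N0, hS⟩
        rw [hSdef, Finset.mem_filter] at hNS
        obtain ⟨-, hNm, hNw⟩ := hNS
        by_cases hNu : G.Saturated N u
        swap
        · have hne := adj_ne hl hadj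
          obtain ⟨e, he⟩ := hadj
          exact max_not_both_unsat hNm he hne hNu hNw
        · have hcard : N.card = M.card := le_antisymm (hM.2 N hNm.1) (hNm.2 M hM.1)
          obtain ⟨z, M', N', hzu, hzN, hzM, hM'm, hM'c, hchar, hN'm, hN'c, hpres,
              hsubset, g, hgM, hgN', hgN⟩ :=
            lemmaP hl (N \ M).card M N u le_rfl hM hNm.1 hcard hMu hNu
          by_cases hzw : z = w
          · have hM'max : G.IsMaximumMatching M' := ⟨hM'm, fun K hK => (hM.2 K hK).trans hM'c.ge⟩
            have hM'w : ¬ G.Saturated M' w := by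
              rw [hchar]
              rintro (⟨_, h⟩ | h)
              · exact h hzw.symm
              · exact (adj_ne hl hadj) h.symm
            have hM'v : ¬ G.Saturated M' v := by
              rw [hchar]
              rintro (⟨h, _⟩ | h)
              · exact hMv h
              · exact huv h.symm
            exact ih M' hM'max hwv hM'w hM'v
          · have hN'max : G.IsMaximumMatching N' := ⟨hN'm, fun K hK => (hNm.2 K hK).trans hN'c.ge⟩
            have hN'w : ¬ G.Saturated N' w := hpres w hNw (fun h => hzw h.symm)
            have hmem : N' ∈ S := by
              rw [hSdef, Finset.mem_filter]
              exact ⟨Finset.mem_univ _, hN'max, hN'w⟩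
            have hle := hNmax N' hmem
            have hsub' : M ∩ N ⊆ M ∩ N' := by
              intro x hx
              rw [Finset.mem_inter] at hx ⊢
              exact ⟨hx.1, hsubset (Finset.mem_inter.2 hx)⟩
            have hss : M ∩ N ⊂ M ∩ N' :=
              (Finset.ssubset_iff_of_subset hsub').2
                ⟨g, Finset.mem_inter.2 ⟨hgM, hgN'⟩, fun h => hgN (Finset.mem_inter.1 h).2⟩
            exact absurd hle (not_le.2 (Finset.card_lt_card hss))

end Descent

section Parity

variable {G : Multigraph}

lemma deg_eq_card (hl : G.Loopless) (v : G.V) :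
    G.deg v = (Finset.univ.filter (fun e => v ∈ G.ends e)).card := by
  classical
  rw [Finset.card_filter]
  unfold deg
  refine Finset.sum_congr rfl (fun e _ => ?_)
  have hne : G.ends e ≠ Sym2.diag v := by
    intro h
    exact hl e (by rw [IsLoop, h]; exact Sym2.diag_isDiag v)
  rw [if_neg hne]

lemma two_dvd_filter_ends (hl : G.Loopless) {C : Finset G.V}
    (hC : ∀ x y, x ∈ C → G.Adj x y → y ∈ C) (e : G.E) :
    2 ∣ (C.filter (fun x => x ∈ G.ends e)).card := by
  classical
  obtain ⟨a, b, hab⟩ := sym2_exists (G.ends e)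
  have hadj : G.Adj a b := ⟨e, hab⟩
  have hne : a ≠ b := adj_ne hl hadj
  have hfil : C.filter (fun x => x ∈ G.ends e) = C.filter (fun x => x = a ∨ x = b) := by
    refine Finset.filter_congr (fun x _ => ?_)
    rw [hab, Sym2.mem_iff]
  rw [hfil]
  by_cases ha : a ∈ C
  · have hb : b ∈ C := hC a b ha hadj
    have heq : C.filter (fun x => x = a ∨ x = b) = {a, b} := by
      ext x
      simp only [Finset.mem_filter, Finset.mem_insert, Finset.mem_singleton]
      constructor
      · rintro ⟨_, h⟩; exact h
      · rintro (rfl | rfl)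
        · exact ⟨ha, Or.inl rfl⟩
        · exact ⟨hb, Or.inr rfl⟩
    rw [heq, Finset.card_pair hne]
  · have hb : b ∉ C := fun hb => ha (hC b a hb (adj_symm hadj))
    have heq : C.filter (fun x => x = a ∨ x = b) = ∅ := by
      ext x
      simp only [Finset.mem_filter, Finset.notMem_empty, iff_false, not_and]
      rintro hx (rfl | rfl)
      · exact ha hx
      · exact hb hx
    rw [heq]
    simp

lemma two_dvd_component (hl : G.Loopless) {k : ℕ} (hreg : ∀ v : G.V, G.deg v = 2 * k + 1)
    {C : Finset G.V} (hC : ∀ x y, x ∈ C → G.Adj x y → y ∈ C) :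
    2 ∣ C.card := by
  classical
  have h1 : ∑ x ∈ C, G.deg x = C.card * (2 * k + 1) := by
    rw [Finset.sum_congr rfl (fun x _ => hreg x), Finset.sum_const, smul_eq_mul]
  have h2 : ∑ x ∈ C, G.deg x
      = ∑ e : G.E, (C.filter (fun x => x ∈ G.ends e)).card := by
    calc ∑ x ∈ C, G.deg x
        = ∑ x ∈ C, ∑ e : G.E, (if x ∈ G.ends e then 1 else 0) := by
          refine Finset.sum_congr rfl (fun x _ => ?_)
          rw [deg_eq_card hl x, Finset.card_filter]
      _ = ∑ e : G.E, ∑ x ∈ C, (if x ∈ G.ends e then 1 else 0) := Finset.sum_comm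
      _ = _ := Finset.sum_congr rfl (fun e _ => (Finset.card_filter _ _).symm)
  have hdvd : 2 ∣ ∑ x ∈ C, G.deg x := by
    rw [h2]
    exact Finset.dvd_sum (fun e _ => two_dvd_filter_ends hl hC e)
  rw [h1] at hdvd
  rcases (Nat.Prime.dvd_mul Nat.prime_two).1 hdvd with h | h
  · exact h
  · omega

lemma two_dvd_sat (hl : G.Loopless) {C : Finset G.V}
    (hC : ∀ x y, x ∈ C → G.Adj x y → y ∈ C) {M : Finset G.E} (hM : G.IsMatching M)
    [DecidablePred (fun x => G.Saturated M x)] :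
    2 ∣ (C.filter (fun x => G.Saturated M x)).card := by
  classical
  have hbi : C.filter (fun x => G.Saturated M x)
      = M.biUnion (fun e => C.filter (fun x => x ∈ G.ends e)) := by
    ext x
    simp only [Finset.mem_biUnion, Finset.mem_filter]
    unfold Saturated
    tauto
  rw [hbi, Finset.card_biUnion]
  · exact Finset.dvd_sum (fun e _ => two_dvd_filter_ends hl hC e)
  · intro e he f hf hef
    rw [Function.onFun, Finset.disjoint_left]
    intro x hx1 hx2
    rw [Finset.mem_filter] at hx1 hx2
    exact hM.2 e he f hf hef x hx1.2 hx2.2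

end Parity

/-- No (2k+1)-regular multigraph contains 2k+2 pairwise edge-disjoint
maximum matchings. -/
theorem no_odd_regular_has_many_disjoint_maximum_matchings
    (G : Multigraph) (k : ℕ) (hne : Nonempty G.V) (hloopless : G.Loopless)
    (hreg : ∀ v : G.V, G.deg v = 2 * k + 1)
    (F : Fin (2 * k + 2) → Finset G.E)
    (hmax : ∀ i, G.IsMaximumMatching (F i))
    (hdisj : ∀ i j, i ≠ j → Disjoint (F i) (F j)) : False := by
  classical
  -- Step 1: every vertex is missed by some maximum matching.
  have hiness : ∀ w : G.V, ∃ N, G.IsMaximumMatching N ∧ ¬ G.Saturated N w := by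
    intro w
    by_contra hcon
    push_neg at hcon
    have hsat : ∀ i, G.Saturated (F i) w := fun i => hcon (F i) (hmax i)
    choose e he hw using hsat
    have hinj : Function.Injective e := by
      intro i j hij
      by_contra hne
      have hd := hdisj i j hne
      rw [Finset.disjoint_left] at hd
      exact hd (he i) (hij ▸ he j)
    have hle : (Finset.univ : Finset (Fin (2 * k + 2))).card
        ≤ (Finset.univ.filter (fun e' => w ∈ G.ends e')).card := by
      refine Finset.card_le_card_of_injOn e (fun i _ => ?_) (fun i _ j _ h => hinj h)
      rw [Finset.mem_coe, Finset.mem_filter]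
      exact ⟨Finset.mem_univ _, hw i⟩
    rw [← deg_eq_card hloopless w, hreg w, Finset.card_univ, Fintype.card_fin] at hle
    omega
  -- Step 2: pick a vertex and a maximum matching missing it.
  obtain ⟨u0⟩ := hne
  obtain ⟨M, hMmax, hMu0⟩ := hiness u0
  -- Step 3: the connected component of u0.
  set C : Finset G.V := Finset.univ.filter (fun x => Relation.ReflTransGen G.Adj u0 x)
    with hCdef
  have hC : ∀ x y, x ∈ C → G.Adj x y → y ∈ C := by
    intro x y hx hxy
    rw [hCdef, Finset.mem_filter] at hx ⊢
    exact ⟨Finset.mem_univ _, hx.2.tail hxy⟩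
  have hCeven : 2 ∣ C.card := two_dvd_component hloopless hreg hC
  have hsat_even : 2 ∣ (C.filter (fun x => G.Saturated M x)).card :=
    two_dvd_sat hloopless hC hMmax.1
  have hsplit := Finset.card_filter_add_card_filter_not
    (s := C) (p := fun x => G.Saturated M x)
  have hunsat_even : 2 ∣ (C.filter (fun x => ¬ G.Saturated M x)).card := by omega
  have hu0C : u0 ∈ C.filter (fun x => ¬ G.Saturated M x) := by
    rw [Finset.mem_filter, hCdef, Finset.mem_filter]
    exact ⟨⟨Finset.mem_univ _, Relation.ReflTransGen.refl⟩, hMu0⟩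
  have h2 : 1 < (C.filter (fun x => ¬ G.Saturated M x)).card := by
    have h1 : 0 < (C.filter (fun x => ¬ G.Saturated M x)).card :=
      Finset.card_pos.2 ⟨u0, hu0C⟩
    omega
  obtain ⟨v, hvmem, hvu0⟩ := Finset.exists_mem_ne h2 u0
  rw [Finset.mem_filter] at hvmem
  have hreach : Relation.ReflTransGen G.Adj u0 v := by
    have hv := hvmem.1
    rw [hCdef, Finset.mem_filter] at hv
    exact hv.2
  exact descent hloopless hiness hreach M hMmax (fun h => hvu0 h.symm) hMu0 hvmem.2

end Multigraph
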